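/- arXiv:2409.14621 — 2 statements merged into one kernel-verified Lean document; each statement's English description precedes it below -/
import Mathlib

section
/- For every integer a ≥ 1, the minimal domination number of the hypercube of dimension 2^a − 1 satisfies γ_{2^a − 1} = 2^(2^a − 1 − a). -/
/-- A finite subset of the hypercube `Q_n = (ZMod 2)^n` is dominating if every point of the
hypercube is at Hamming distance at most 1 from some element of the subset. -/
def IsDominating {n : ℕ} (Δ : Finset (Fin n → ZMod 2)) : Prop :=
  ∀ y : Fin n → ZMod 2, ∃ x ∈ Δ, hammingDist x y ≤ 1

/-- The minimal domination number `γ_n` of the `n`-dimensional hypercube. -/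
noncomputable def gamma (n : ℕ) : ℕ :=
  sInf {k | ∃ Δ : Finset (Fin n → ZMod 2), IsDominating Δ ∧ Δ.card = k}

open Finset

lemma zmod2_eq : ∀ u v w : ZMod 2, u ≠ w → v ≠ w → u = v := by decide

lemma zmod2_add_self : ∀ u : ZMod 2, u + u = 0 := by decide

/-- Each Hamming ball of radius 1 has at most `n + 1` points. -/
lemma ball_card_le {n : ℕ} (x : Fin n → ZMod 2) :
    (Finset.univ.filter fun y => hammingDist x y ≤ 1).card ≤ n + 1 := by
  classical
  have h := Finset.card_le_card_of_injOn
    (s := Finset.univ.filter fun y : Fin n → ZMod 2 => hammingDist x y ≤ 1)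
    (t := insert ∅ (Finset.univ.image fun i : Fin n => ({i} : Finset (Fin n))))
    (f := fun y : Fin n → ZMod 2 => Finset.univ.filter fun j => x j ≠ y j)
    ?_ ?_
  · refine h.trans ?_
    refine (Finset.card_insert_le _ _).trans ?_
    have := Finset.card_image_le (s := (Finset.univ : Finset (Fin n)))
      (f := fun i : Fin n => ({i} : Finset (Fin n)))
    simp at this ⊢
    omega
  · intro y hy
    simp only [Finset.mem_coe, Finset.mem_filter] at hy
    have hd : (Finset.univ.filter fun j => x j ≠ y j).card ≤ 1 := hy.2
    interval_cases hc : (Finset.univ.filter fun j => x j ≠ y j).card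
    · rw [Finset.card_eq_zero] at hc
      simp [hc]
    · rw [Finset.card_eq_one] at hc
      obtain ⟨i, hi⟩ := hc
      simp only [Finset.mem_coe, Finset.mem_insert, Finset.mem_image, Finset.mem_univ, true_and]
      exact Or.inr ⟨i, hi.symm⟩
  · intro y hy y' hy' hEq
    funext j
    simp only at hEq
    by_cases hj : j ∈ Finset.univ.filter fun j => x j ≠ y j
    · have hj' : j ∈ Finset.univ.filter fun j => x j ≠ y' j := hEq ▸ hj
      simp only [Finset.mem_filter] at hj hj'
      exact zmod2_eq _ _ _ (Ne.symm hj.2) (Ne.symm hj'.2)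
    · have hj' : j ∉ Finset.univ.filter fun j => x j ≠ y' j := hEq ▸ hj
      simp only [Finset.mem_filter, Finset.mem_univ, true_and, not_not] at hj hj'
      rw [← hj, ← hj']

/-- Lower bound: any dominating set of `Q_n` has at least `2^n / (n+1)` elements. -/
lemma lower_bound {n : ℕ} (Δ : Finset (Fin n → ZMod 2)) (hΔ : IsDominating Δ) :
    2 ^ n ≤ Δ.card * (n + 1) := by
  classical
  have hcover : (Finset.univ : Finset (Fin n → ZMod 2)) ⊆
      Δ.biUnion fun x => Finset.univ.filter fun y => hammingDist x y ≤ 1 := by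
    intro y _
    obtain ⟨x, hx, hd⟩ := hΔ y
    exact Finset.mem_biUnion.mpr ⟨x, hx, by simp [hd]⟩
  have h1 : (Finset.univ : Finset (Fin n → ZMod 2)).card ≤
      Δ.card * (n + 1) := by
    calc (Finset.univ : Finset (Fin n → ZMod 2)).card
        ≤ (Δ.biUnion fun x => Finset.univ.filter fun y => hammingDist x y ≤ 1).card :=
          Finset.card_le_card hcover
      _ ≤ ∑ x ∈ Δ, (Finset.univ.filter fun y => hammingDist x y ≤ 1).card :=
          Finset.card_biUnion_le
      _ ≤ ∑ _x ∈ Δ, (n + 1) := Finset.sum_le_sum fun x _ => ball_card_le x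
      _ = Δ.card * (n + 1) := by rw [Finset.sum_const, smul_eq_mul]
  have hcard : (Finset.univ : Finset (Fin n → ZMod 2)).card = 2 ^ n := by
    simp [Finset.card_univ]
  omega

/-- Upper bound: the Hamming code. -/
lemma exists_code (a : ℕ) (ha : 1 ≤ a) :
    ∃ Δ : Finset (Fin (2 ^ a - 1) → ZMod 2),
      IsDominating Δ ∧ Δ.card = 2 ^ (2 ^ a - 1 - a) := by
  classical
  set n := 2 ^ a - 1 with hn
  have hpow : 1 ≤ 2 ^ a := Nat.one_le_two_pow
  have han : a ≤ n := by
    have := Nat.lt_two_pow_self (n := a)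
    omega
  -- enumerate nonzero vectors of (Fin a → ZMod 2) by Fin n
  have hcardsub : Fintype.card {v : Fin a → ZMod 2 // v ≠ 0} = n := by
    have h1 : Fintype.card {v : Fin a → ZMod 2 // ¬ (v = 0)} =
        Fintype.card (Fin a → ZMod 2) - Fintype.card {v : Fin a → ZMod 2 // v = 0} :=
      Fintype.card_subtype_compl _
    have h2 : Fintype.card {v : Fin a → ZMod 2 // v = 0} = 1 := Fintype.card_subtype_eq 0
    have h3 : Fintype.card (Fin a → ZMod 2) = 2 ^ a := by simp
    simpa [h2, h3, hn] using h1
  obtain e : Fin n ≃ {v : Fin a → ZMod 2 // v ≠ 0} :=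
    (Fintype.equivFinOfCardEq hcardsub).symm
  -- syndrome map
  let f : (Fin n → ZMod 2) →+ (Fin a → ZMod 2) :=
    { toFun := fun x => ∑ i, x i • ((e i : Fin a → ZMod 2)),
      map_zero' := by simp,
      map_add' := by
        intro x y
        simp only [Pi.add_apply, add_smul]
        rw [Finset.sum_add_distrib] }
  have hf_single : ∀ i : Fin n, f ((Pi.single i (1 : ZMod 2) : Fin n → ZMod 2)) = (e i : Fin a → ZMod 2) := by
    intro i
    have hrfl : f ((Pi.single i (1 : ZMod 2) : Fin n → ZMod 2)) =
        ∑ j, (Pi.single i (1 : ZMod 2) : Fin n → ZMod 2) j • ((e j : Fin a → ZMod 2)) := rfl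
    rw [hrfl, Finset.sum_eq_single_of_mem i (Finset.mem_univ i)]
    · simp
    · intro j _ hj
      rw [Pi.single_eq_of_ne hj, zero_smul]
  have hf_surj : Function.Surjective f := by
    intro w
    by_cases hw : w = 0
    · exact ⟨0, by simp [hw]⟩
    · refine ⟨(Pi.single (e.symm ⟨w, hw⟩) (1 : ZMod 2) : Fin n → ZMod 2), ?_⟩
      rw [hf_single]
      simp
  -- size of the kernel
  have hker : Fintype.card f.ker = 2 ^ (n - a) := by
    have hquot : Fintype.card ((Fin n → ZMod 2) ⧸ f.ker) = 2 ^ a := by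
      rw [Fintype.card_congr (QuotientAddGroup.quotientKerEquivOfSurjective f hf_surj).toEquiv]
      simp
    have htot : Fintype.card (Fin n → ZMod 2) =
        Fintype.card ((Fin n → ZMod 2) ⧸ f.ker) * Fintype.card f.ker := by
      rw [Fintype.card_congr (AddSubgroup.addGroupEquivQuotientProdAddSubgroup (s := f.ker))]
      rw [Fintype.card_prod]
    have h2n : Fintype.card (Fin n → ZMod 2) = 2 ^ n := by simp
    rw [h2n, hquot] at htot
    have : 2 ^ n = 2 ^ a * 2 ^ (n - a) := by
      rw [← pow_add]
      congr 1
      omega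
    rw [this] at htot
    exact (Nat.eq_of_mul_eq_mul_left (by positivity) htot).symm
  refine ⟨Finset.univ.filter fun x => f x = 0, ?_, ?_⟩
  · -- dominating
    intro y
    by_cases hy : f y = 0
    · exact ⟨y, by simp [hy], by simp⟩
    · set i := e.symm ⟨f y, hy⟩ with hi
      refine ⟨y + (Pi.single i (1 : ZMod 2) : Fin n → ZMod 2), ?_, ?_⟩
      · simp only [Finset.mem_filter, Finset.mem_univ, true_and]
        rw [map_add, hf_single, hi]
        simp only [Equiv.apply_symm_apply]
        funext j
        exact zmod2_add_self _
      · have hsub : (Finset.univ.filter fun j => (y + (Pi.single i (1 : ZMod 2) : Fin n → ZMod 2)) j ≠ y j)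
            ⊆ {i} := by
          intro j hj
          simp only [Finset.mem_filter, Finset.mem_univ, true_and, Pi.add_apply] at hj
          simp only [Finset.mem_singleton]
          by_contra hji
          rw [Pi.single_eq_of_ne hji, add_zero] at hj
          exact hj rfl
        calc hammingDist (y + (Pi.single i (1 : ZMod 2) : Fin n → ZMod 2)) y
            = (Finset.univ.filter fun j => (y + (Pi.single i (1 : ZMod 2) : Fin n → ZMod 2)) j ≠ y j).card := rfl
          _ ≤ ({i} : Finset (Fin n)).card := Finset.card_le_card hsub
          _ = 1 := Finset.card_singleton i
  · -- cardinality
    rw [← hker]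
    rw [← Fintype.card_subtype]
    apply Fintype.card_congr
    exact Equiv.subtypeEquivRight fun x => Iff.symm AddMonoidHom.mem_ker

/-- For every integer `a ≥ 1`, `γ_{2^a - 1} = 2^(2^a - 1 - a)`. -/
theorem stmt_3 (a : ℕ) (ha : 1 ≤ a) : gamma (2 ^ a - 1) = 2 ^ (2 ^ a - 1 - a) := by
  unfold gamma
  obtain ⟨Δ, hdom, hcard⟩ := exists_code a ha
  have hmem : 2 ^ (2 ^ a - 1 - a) ∈
      {k | ∃ Δ : Finset (Fin (2 ^ a - 1) → ZMod 2), IsDominating Δ ∧ Δ.card = k} :=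
    ⟨Δ, hdom, hcard⟩
  apply le_antisymm
  · exact Nat.sInf_le hmem
  · obtain ⟨Δ', hdom', hcard'⟩ := Nat.sInf_mem (⟨_, hmem⟩ : Set.Nonempty _)
    have hlb := lower_bound Δ' hdom'
    have hpow : 1 ≤ 2 ^ a := Nat.one_le_two_pow
    have han : a ≤ 2 ^ a - 1 := by
      have := Nat.lt_two_pow_self (n := a)
      omega
    have hn1 : 2 ^ a - 1 + 1 = 2 ^ a := by omega
    rw [hn1] at hlb
    have hsplit : 2 ^ (2 ^ a - 1) = 2 ^ (2 ^ a - 1 - a) * 2 ^ a := by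
      rw [← pow_add]
      congr 1
      omega
    rw [hsplit] at hlb
    have := Nat.le_of_mul_le_mul_right hlb (by positivity : 0 < 2 ^ a)
    omega
end

section
/- For every integer n ≥ 1: λ(n) ≥ 2^(n − n̂ − 1) if ň > 0, and λ(n) = 2^(n − n̂) if ň = 0 (equivalently, λ(n) ≥ 2^(n − n̂ − [ň > 0]) with equality when ň = 0). -/
open Finset in
-- Lower bound construction: a parity-check (Hamming-type) code
lemma exists_code_s15 (n m : ℕ) (hnm : n ≤ 2 ^ m - 1) :
    ∃ D : Finset (Fin n → ZMod 2),
      (∀ x ∈ D, ∀ y ∈ D, x ≠ y → 3 ≤ hammingDist x y) ∧ 2 ^ (n - m) ≤ D.card := by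
  classical
  have hcard : Fintype.card (Fin n) ≤ Fintype.card {v : Fin m → ZMod 2 // v ≠ 0} := by
    rw [Fintype.card_fin, Fintype.card_subtype_compl]
    simpa using hnm
  obtain ⟨e⟩ := Function.Embedding.nonempty_iff_card_le.2 hcard
  -- the linear "syndrome" map
  let L : (Fin n → ZMod 2) →ₗ[ZMod 2] (Fin m → ZMod 2) :=
    { toFun := fun x => ∑ i, x i • (e i : Fin m → ZMod 2)
      map_add' := by
        intro x y
        simp [add_smul, Finset.sum_add_distrib]
      map_smul' := by
        intro c x
        simp [mul_smul, Finset.smul_sum] }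
  refine ⟨Finset.univ.filter (fun x => L x = 0), ?_, ?_⟩
  · intro x hx y hy hxy
    rw [Finset.mem_filter] at hx hy
    by_contra hlt
    push_neg at hlt
    set z : Fin n → ZMod 2 := x - y with hz
    have hzker : L z = 0 := by rw [hz, map_sub, hx.2, hy.2, sub_zero]
    have hzne : z ≠ 0 := sub_ne_zero.2 hxy
    have hnorm : hammingNorm z = hammingDist x y := by
      simp only [hammingNorm, hammingDist, hz, Pi.sub_apply, ne_eq, sub_eq_zero]
    have hone : ∀ a : ZMod 2, a ≠ 0 → a = 1 := by decide
    set S : Finset (Fin n) := {i | z i ≠ 0} with hS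
    have hLz : L z = ∑ i ∈ S, (e i : Fin m → ZMod 2) := by
      have h1 : L z = ∑ i, z i • (e i : Fin m → ZMod 2) := rfl
      rw [h1, ← Finset.sum_subset (Finset.subset_univ S)]
      · refine Finset.sum_congr rfl fun i hi => ?_
        rw [hS] at hi
        simp only [Finset.mem_filter] at hi
        rw [hone (z i) (by simpa using hi.2), one_smul]
      · intro i _ hi
        rw [hS] at hi
        simp only [Finset.mem_filter, Finset.mem_univ, true_and, not_not] at hi
        rw [hi, zero_smul]
    have hcardS : S.card = hammingNorm z := rfl
    have h1le : 1 ≤ S.card := by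
      rw [hcardS]
      exact Nat.one_le_iff_ne_zero.2 (hammingNorm_ne_zero_iff.2 hzne)
    have h2ge : S.card ≤ 2 := by omega
    interval_cases h : S.card
    · obtain ⟨i, hi⟩ := Finset.card_eq_one.1 h
      rw [hi, Finset.sum_singleton] at hLz
      exact (e i).2 (by rw [← hLz, hzker])
    · obtain ⟨i, j, hij, hij'⟩ := Finset.card_eq_two.1 h
      rw [hij', Finset.sum_insert (by simpa using hij), Finset.sum_singleton] at hLz
      have hsum : (e i : Fin m → ZMod 2) + e j = 0 := by rw [← hLz, hzker]
      have h2 : ∀ a b : ZMod 2, a + b = 0 → a = b := by decide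
      have : (e i : Fin m → ZMod 2) = e j := funext fun k => h2 _ _ (congrFun hsum k)
      exact hij (e.injective (Subtype.ext this))
  · have hcongr : (Finset.univ.filter (fun x => L x = 0)).card
        = Fintype.card (LinearMap.ker L) := by
      rw [← Fintype.card_subtype]
      exact Fintype.card_congr (Equiv.subtypeEquivRight fun x => Iff.rfl)
    rw [hcongr, Module.card_eq_pow_finrank (K := ZMod 2), ZMod.card]
    apply Nat.pow_le_pow_right (by norm_num)
    have hr := LinearMap.finrank_range_add_finrank_ker L
    rw [Module.finrank_fin_fun] at hr
    have hle : Module.finrank (ZMod 2) (LinearMap.range L) ≤ m := by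
      have := Submodule.finrank_le (LinearMap.range L)
      rwa [Module.finrank_fin_fun] at this
    omega

lemma packing (n : ℕ) (D : Finset (Fin n → ZMod 2))
    (hD : ∀ x ∈ D, ∀ y ∈ D, x ≠ y → 3 ≤ hammingDist x y) :
    D.card * (n + 1) ≤ 2 ^ n := by
  classical
  -- flip one coordinate (or none)
  let f : D × Option (Fin n) → (Fin n → ZMod 2) := fun p =>
    match p.2 with
    | none => p.1
    | some i => Function.update (p.1 : Fin n → ZMod 2) i ((p.1 : Fin n → ZMod 2) i + 1)
  have hflip : ∀ (x : Fin n → ZMod 2) (i : Fin n),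
      hammingDist x (Function.update x i (x i + 1)) ≤ 1 := by
    intro x i
    have : ({j | x j ≠ Function.update x i (x i + 1) j} : Finset (Fin n)) ⊆ {i} := by
      intro j hj
      simp only [Finset.mem_filter, Finset.mem_univ, true_and] at hj
      simp only [Finset.mem_singleton]
      by_contra hji
      exact hj (by rw [Function.update_of_ne hji])
    calc hammingDist x (Function.update x i (x i + 1)) ≤ ({i} : Finset (Fin n)).card :=
          Finset.card_le_card this
      _ = 1 := Finset.card_singleton i
  have hne : ∀ (x : Fin n → ZMod 2) (i : Fin n), Function.update x i (x i + 1) ≠ x := by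
    intro x i h
    have := congrFun h i
    rw [Function.update_self] at this
    revert this
    generalize x i = a
    revert a; decide
  have hdist : ∀ (p : D × Option (Fin n)), hammingDist (p.1 : Fin n → ZMod 2) (f p) ≤ 1 := by
    rintro ⟨x, _ | i⟩
    · simp [f]
    · exact hflip x i
  have hinj : Function.Injective f := by
    rintro ⟨x, a⟩ ⟨y, b⟩ hfe
    have hxy : (x : Fin n → ZMod 2) = y := by
      by_contra hne'
      have h3 := hD x x.2 y y.2 hne'
      have : hammingDist (x : Fin n → ZMod 2) (y : Fin n → ZMod 2)
          ≤ hammingDist (x : Fin n → ZMod 2) (f (x, a))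
            + hammingDist (f (y, b)) (y : Fin n → ZMod 2) := by
        rw [hfe]
        exact hammingDist_triangle _ _ _
      have h1 : hammingDist (x : Fin n → ZMod 2) (f (x, a)) ≤ 1 := hdist (x, a)
      have h2 : hammingDist (f (y, b)) (y : Fin n → ZMod 2) ≤ 1 := by
        rw [hammingDist_comm]; exact hdist (y, b)
      omega
    have hxy' : x = y := Subtype.ext hxy
    subst hxy'
    -- now a = b
    rcases a with _ | i <;> rcases b with _ | j
    · rfl
    · exact absurd hfe.symm (by simp only [f]; exact hne x j)
    · exact absurd hfe (by simp only [f]; exact hne x i)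
    · by_cases hij : i = j
      · rw [hij]
      · exfalso
        have := congrFun hfe i
        simp only [f] at this
        rw [Function.update_self, Function.update_of_ne hij] at this
        revert this
        generalize (x : Fin n → ZMod 2) i = c
        revert c; decide
  have := Fintype.card_le_of_injective f hinj
  simpa [Fintype.card_option, mul_comm] using this

/-- `λ(n)`: the maximum cardinality of a 3-separated subset of `Q_n`
(a set in which any two distinct elements have Hamming distance at least 3). -/
noncomputable def lambda (n : ℕ) : ℕ :=
  sSup {k | ∃ D : Finset (Fin n → ZMod 2),
    (∀ x ∈ D, ∀ y ∈ D, x ≠ y → 3 ≤ hammingDist x y) ∧ D.card = k}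

lemma lambda_bdd (n : ℕ) : BddAbove {k | ∃ D : Finset (Fin n → ZMod 2),
    (∀ x ∈ D, ∀ y ∈ D, x ≠ y → 3 ≤ hammingDist x y) ∧ D.card = k} := by
  refine ⟨2 ^ n, ?_⟩
  rintro k ⟨D, -, rfl⟩
  calc D.card ≤ Fintype.card (Fin n → ZMod 2) := Finset.card_le_univ D
    _ = 2 ^ n := by simp [Fintype.card_fun]

/-- For `n ≥ 1`, writing `n = 2^n̂ - 1 + ň` with `n̂ = ⌊log₂(n+1)⌋` and
`ň = n + 1 - 2^n̂`: if `ň > 0` then `λ(n) ≥ 2^(n - n̂ - 1)`, and if `ň = 0`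
then `λ(n) = 2^(n - n̂)`. -/
theorem stmt_15 (n : ℕ) (hn : 1 ≤ n) :
    (0 < n + 1 - 2 ^ Nat.log 2 (n + 1) →
      2 ^ (n - Nat.log 2 (n + 1) - 1) ≤ lambda n) ∧
    (n + 1 - 2 ^ Nat.log 2 (n + 1) = 0 →
      lambda n = 2 ^ (n - Nat.log 2 (n + 1))) := by
  set l := Nat.log 2 (n + 1) with hl
  have h1 : 2 ^ l ≤ n + 1 := Nat.pow_log_le_self 2 (by omega)
  have h2 : n + 1 < 2 ^ (l + 1) := Nat.lt_pow_succ_log_self (by norm_num) _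
  have hge : ∀ m : ℕ, n ≤ 2 ^ m - 1 → 2 ^ (n - m) ≤ lambda n := by
    intro m hm
    obtain ⟨D, hsep, hcard⟩ := exists_code_s15 n m hm
    calc 2 ^ (n - m) ≤ D.card := hcard
      _ ≤ lambda n := le_csSup (lambda_bdd n) ⟨D, hsep, rfl⟩
  constructor
  · intro _
    have hm : n ≤ 2 ^ (l + 1) - 1 := by omega
    have := hge (l + 1) hm
    rwa [Nat.sub_sub]
  · intro h0
    have hn1 : n + 1 = 2 ^ l := by omega
    have hln : l ≤ n := by
      by_contra hc
      push_neg at hc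
      have := Nat.lt_two_pow_self (n := n)
      have h3 : 2 ^ (n + 1) ≤ 2 ^ l := Nat.pow_le_pow_right (by norm_num) hc
      have h4 : n + 1 < 2 ^ (n + 1) := Nat.lt_two_pow_self
      omega
    refine le_antisymm ?_ ?_
    · refine csSup_le ⟨0, ∅, by simp⟩ ?_
      rintro k ⟨D, hsep, rfl⟩
      have hp := packing n D hsep
      rw [hn1] at hp
      have hsplit : 2 ^ n = 2 ^ (n - l) * 2 ^ l := by
        rw [← pow_add]
        congr 1
        omega
      rw [hsplit] at hp
      exact Nat.le_of_mul_le_mul_right hp (pow_pos (by norm_num) l)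
    · exact hge l (by omega)
end
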